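/- Let A be a self-adjoint operator on a Hilbert space H and g a bounded vector for A (‖Aⁿg‖ ≤ B_gⁿ for all n). Then the map h ↦ h(A)g extends to a unitary isomorphism from L²(ℝ, dμ_g^{(A)}) onto closure(K(A,g)), where μ_g^{(A)} is the scalar spectral measure of A at g. In particular, if additionally A is injective and g ∈ ran A, then the unique solution f to Af = g satisfies f = h(A)g with h(λ) = 1/λ ∈ L²(ℝ, dμ_g^{(A)}), hence f ∈ closure(K(A,g)). -/

import Mathlib

open MeasureTheory Polynomial

namespace Stmt19Aux



variable {H : Type*} [NormedAddCommGroup H] [InnerProductSpace ℂ H]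

/-- `p ↦ Σ coeff k • ψ k` as a linear map. -/
noncomputable def phi (ψ : ℕ → H) : Polynomial ℂ →ₗ[ℂ] H where
  toFun p := p.sum fun k c => c • ψ k
  map_add' p q := Polynomial.sum_add_index p q _ (fun i => zero_smul ℂ (ψ i))
    (fun a b₁ b₂ => add_smul b₁ b₂ (ψ a))
  map_smul' c p := by
    show (c • p).sum (fun k c => c • ψ k) = _
    rw [Polynomial.sum_smul_index p c _ (fun i => zero_smul ℂ (ψ i))]
    simp only [RingHom.id_apply, Polynomial.sum, Finset.smul_sum, mul_smul]

theorem phi_monomial (ψ : ℕ → H) (k : ℕ) (c : ℂ) :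
    phi ψ (monomial k c) = c • ψ k := by
  by_cases hc : c = 0
  · simp [hc, phi, Polynomial.sum]
  · simp [phi, Polynomial.sum_monomial_index, zero_smul]

theorem phi_X_pow (ψ : ℕ → H) (k : ℕ) : phi ψ (X ^ k : Polynomial ℂ) = ψ k := by
  rw [← Polynomial.monomial_one_right_eq_X_pow]
  rw [phi_monomial, one_smul]

theorem phi_eq_sum_range (ψ : ℕ → H) (p : Polynomial ℂ) {n : ℕ} (hn : p.natDegree < n) :
    phi ψ p = ∑ k ∈ Finset.range n, p.coeff k • ψ k := by
  show p.sum (fun k c => c • ψ k) = _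
  exact Polynomial.sum_over_range' p (fun i => zero_smul ℂ (ψ i)) n hn

theorem phi_X_mul (ψ : ℕ → H) (p : Polynomial ℂ) :
    phi ψ (X * p) = p.sum fun k c => c • ψ (k + 1) := by
  induction p using Polynomial.induction_on' with
  | add p q hp hq =>
      rw [mul_add, map_add, hp, hq,
        Polynomial.sum_add_index p q _ (fun i => zero_smul ℂ (ψ (i+1)))
          (fun a b₁ b₂ => add_smul b₁ b₂ (ψ (a+1)))]
  | monomial k c =>
      rw [Polynomial.X_mul_monomial, phi_monomial]
      by_cases hc : c = 0
      · simp [hc, Polynomial.sum]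
      · rw [Polynomial.sum_monomial_index _ _ (zero_smul ℂ (ψ (k+1)))]



/-- A.e. bound from moment growth. -/
theorem ae_abs_le_of_moments {μ : Measure ℝ} [IsFiniteMeasure μ] (B C : ℝ) (hB : 0 < B)
    (hC : 0 ≤ C) (hint : ∀ n : ℕ, Integrable (fun x : ℝ => x ^ (2 * n)) μ)
    (hmom : ∀ n : ℕ, ∫ x : ℝ, x ^ (2 * n) ∂μ ≤ C * B ^ (2 * n)) :
    ∀ᵐ x ∂μ, |x| ≤ B := by
  have key : ∀ c : ℝ, B < c → μ {x : ℝ | c ≤ |x|} = 0 := by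
    intro c hc
    have hc0 : 0 < c := hB.trans hc
    have hm : ∀ m : ℕ, (μ {x : ℝ | c ≤ |x|}).toReal ≤ C * (B / c) ^ (2 * m) := by
      intro m
      have h1 : (c ^ (2 * m)) * (μ {x : ℝ | c ^ (2 * m) ≤ x ^ (2 * m)}).toReal
          ≤ ∫ x : ℝ, x ^ (2 * m) ∂μ := by
        refine mul_meas_ge_le_integral_of_nonneg ?_ (hint m) _
        · filter_upwards with x
          exact even_two_mul m |>.pow_nonneg x
      have hsub : {x : ℝ | c ≤ |x|} ⊆ {x : ℝ | c ^ (2 * m) ≤ x ^ (2 * m)} := by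
        intro x hx
        simp only [Set.mem_setOf_eq] at *
        calc c ^ (2 * m) ≤ |x| ^ (2 * m) := pow_le_pow_left₀ hc0.le hx _
          _ = x ^ (2 * m) := by rw [← abs_pow, abs_of_nonneg ((even_two_mul m).pow_nonneg x)]
      have h2 : (μ {x : ℝ | c ≤ |x|}).toReal ≤ (μ {x : ℝ | c ^ (2 * m) ≤ x ^ (2 * m)}).toReal := by
        refine ENNReal.toReal_mono (measure_ne_top _ _) (measure_mono hsub)
      have h3 := (h1.trans (hmom m))
      have hcpow : 0 < c ^ (2 * m) := pow_pos hc0 _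
      calc (μ {x : ℝ | c ≤ |x|}).toReal
          ≤ (μ {x : ℝ | c ^ (2 * m) ≤ x ^ (2 * m)}).toReal := h2
        _ ≤ (C * B ^ (2 * m)) / c ^ (2 * m) := by
            rw [le_div_iff₀ hcpow]
            calc (μ {x : ℝ | c ^ (2*m) ≤ x ^ (2*m)}).toReal * c ^ (2*m)
                = c ^ (2*m) * (μ {x : ℝ | c ^ (2*m) ≤ x ^ (2*m)}).toReal := mul_comm _ _
              _ ≤ C * B ^ (2 * m) := h3
        _ = C * (B / c) ^ (2 * m) := by rw [div_pow, mul_div_assoc]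
    have hr : |B / c| < 1 := by
      rw [abs_of_nonneg (div_nonneg hB.le hc0.le)]
      exact (div_lt_one hc0).mpr hc
    have htend : Filter.Tendsto (fun m : ℕ => C * (B / c) ^ (2 * m)) Filter.atTop (nhds 0) := by
      have := (tendsto_pow_atTop_nhds_zero_of_abs_lt_one hr).const_mul C
      rw [mul_zero] at this
      exact this.comp (Filter.tendsto_atTop_atTop_of_monotone (fun a b h => by omega)
        (fun b => ⟨b, by omega⟩))
    have hle0 : (μ {x : ℝ | c ≤ |x|}).toReal ≤ 0 := ge_of_tendsto' htend hm
    have : (μ {x : ℝ | c ≤ |x|}).toReal = 0 := le_antisymm hle0 ENNReal.toReal_nonneg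
    exact (ENNReal.toReal_eq_zero_iff _).mp this |>.resolve_right (measure_ne_top _ _)
  rw [ae_iff]
  have hU : {x : ℝ | ¬ |x| ≤ B} ⊆ ⋃ n : ℕ, {x : ℝ | B + 1 / (n + 1) ≤ |x|} := by
    intro x hx
    simp only [Set.mem_setOf_eq, not_le] at hx
    obtain ⟨n, hn⟩ := exists_nat_one_div_lt (sub_pos.mpr hx)
    exact Set.mem_iUnion.mpr ⟨n, by simp only [Set.mem_setOf_eq]; linarith⟩
  refine measure_mono_null hU (measure_iUnion_null fun n => key _ ?_)
  have : (0:ℝ) < 1 / (n + 1) := by positivity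
  linarith



theorem integrable_pow_of_moments {μ : Measure ℝ} [IsFiniteMeasure μ]
    {H : Type*} [NormedAddCommGroup H] [InnerProductSpace ℂ H] (g : H) (ψ : ℕ → H)
    (hψ0 : ψ 0 = g)
    (hμ : ∀ n : ℕ, ∫ x : ℝ, (x : ℂ) ^ n ∂μ = (inner ℂ g (ψ n) : ℂ))
    (h1 : ∀ n : ℕ, (inner ℂ g (ψ (2 * n)) : ℂ) = (‖ψ n‖ : ℂ) ^ 2)
    (h2 : ∀ n : ℕ, ψ n = 0 → g = 0) :
    ∀ n : ℕ, Integrable (fun x : ℝ => x ^ n) μ := by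
  have heven : ∀ n : ℕ, Integrable (fun x : ℝ => x ^ (2 * n)) μ := by
    intro n
    by_contra hni
    have hcni : ¬ Integrable (fun x : ℝ => (x : ℂ) ^ (2 * n)) μ := by
      intro h
      refine hni ?_
      have := h.norm
      have heq : (fun x : ℝ => ‖(x : ℂ) ^ (2 * n)‖) = fun x : ℝ => x ^ (2 * n) := by
        funext x
        rw [norm_pow, Complex.norm_real, Real.norm_eq_abs, ← abs_pow,
          abs_of_nonneg ((even_two_mul n).pow_nonneg x)]
      rwa [heq] at this
    have hz : (inner ℂ g (ψ (2 * n)) : ℂ) = 0 := by rw [← hμ]; exact integral_undef hcni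
    have hψn : ψ n = 0 := by
      have := (h1 n).symm.trans hz
      have : (‖ψ n‖ : ℂ) = 0 := by
        exact pow_eq_zero_iff (n := 2) (by norm_num) |>.mp this
      rw [Complex.ofReal_eq_zero, norm_eq_zero] at this
      exact this
    have hg : g = 0 := h2 n hψn
    have hμ0 : μ = 0 := by
      have h0 := hμ 0
      simp only [pow_zero, hψ0, hg, inner_zero_left, integral_const] at h0
      rcases smul_eq_zero.mp h0 with h0 | h0
      swap
      · exact absurd h0 one_ne_zero
      exact Measure.measure_univ_eq_zero.mp
        ((ENNReal.toReal_eq_zero_iff _).mp h0 |>.resolve_right (measure_ne_top _ _))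
    rw [hμ0] at hni
    exact hni (integrable_zero_measure)
  intro n
  refine Integrable.mono' ((integrable_const (1:ℝ)).add (heven n))
    (continuous_pow n).aestronglyMeasurable ?_
  filter_upwards with x
  rw [Real.norm_eq_abs]
  simp only [Pi.add_apply]
  rw [abs_pow]
  rcases le_total |x| 1 with h | h
  · have hh : |x| ^ n ≤ 1 := pow_le_one₀ (abs_nonneg x) h
    have h2n : (0:ℝ) ≤ x ^ (2*n) := (even_two_mul n).pow_nonneg x
    linarith
  · have hh1 : |x| ^ n ≤ |x| ^ (2 * n) := pow_le_pow_right₀ h (by omega)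
    have hh2 : |x| ^ (2*n) = x ^ (2*n) := by
      rw [← abs_pow, abs_of_nonneg ((even_two_mul n).pow_nonneg x)]
    linarith [hh1, hh2.le, hh2.ge]

theorem integrable_cpow_of_moments {μ : Measure ℝ} (hint : ∀ n : ℕ, Integrable (fun x : ℝ => x ^ n) μ) :
    ∀ n : ℕ, Integrable (fun x : ℝ => (x : ℂ) ^ n) μ := by
  intro n
  have := (hint n).ofReal (𝕜 := ℂ)
  simpa using this

noncomputable def Lam (μ : Measure ℝ)
    (hmemp : ∀ p : Polynomial ℂ, MemLp (fun x : ℝ => p.eval (x : ℂ)) 2 μ) :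
    Polynomial ℂ →ₗ[ℂ] Lp ℂ 2 μ where
  toFun p := (hmemp p).toLp _
  map_add' p q := by
    refine Lp.ext ?_
    filter_upwards [MemLp.coeFn_toLp (hmemp (p + q)), MemLp.coeFn_toLp (hmemp p),
      MemLp.coeFn_toLp (hmemp q), Lp.coeFn_add ((hmemp p).toLp _) ((hmemp q).toLp _)]
      with x h1 h2 h3 h4
    rw [h1, h4, Pi.add_apply, h2, h3]
    simp
  map_smul' c p := by
    refine Lp.ext ?_
    filter_upwards [MemLp.coeFn_toLp (hmemp (c • p)), MemLp.coeFn_toLp (hmemp p),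
      Lp.coeFn_smul c ((hmemp p).toLp _)] with x h1 h2 h3
    rw [RingHom.id_apply, h1, h3, Pi.smul_apply, h2]
    simp

theorem Lam_coe (μ : Measure ℝ)
    (hmemp : ∀ p : Polynomial ℂ, MemLp (fun x : ℝ => p.eval (x : ℂ)) 2 μ) (p : Polynomial ℂ) :
    ⇑(Lam μ hmemp p) =ᵐ[μ] fun x : ℝ => p.eval (x : ℂ) :=
  MemLp.coeFn_toLp (hmemp p)

theorem inner_phi_lam (ψ : ℕ → H) (μ : Measure ℝ) [IsFiniteMeasure μ]
    (hmemp : ∀ p : Polynomial ℂ, MemLp (fun x : ℝ => p.eval (x : ℂ)) 2 μ)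
    (hintC : ∀ n : ℕ, Integrable (fun x : ℝ => (x : ℂ) ^ n) μ)
    (hinner : ∀ j k : ℕ, (inner ℂ (ψ j) (ψ k) : ℂ) = ∫ x : ℝ, (x : ℂ) ^ (j + k) ∂μ)
    (p q : Polynomial ℂ) :
    (inner ℂ (phi ψ p) (phi ψ q) : ℂ) = inner ℂ (Lam μ hmemp p) (Lam μ hmemp q) := by
  have key : ∀ (j k : ℕ) (a b : ℂ),
      ∫ x : ℝ, (a * (x:ℂ)^j) * (b * (x:ℂ)^k) ∂μ = a * b * ∫ x : ℝ, (x:ℂ)^(j+k) ∂μ := by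
    intro j k a b
    rw [← integral_const_mul]
    refine integral_congr_ae (Filter.Eventually.of_forall fun x => ?_)
    simp only [pow_add]; ring
  -- RHS
  have hR : (inner ℂ (Lam μ hmemp p) (Lam μ hmemp q) : ℂ)
      = ∫ x : ℝ, (starRingEnd ℂ) (p.eval (x:ℂ)) * q.eval (x:ℂ) ∂μ := by
    rw [L2.inner_def]
    refine integral_congr_ae ?_
    filter_upwards [Lam_coe μ hmemp p, Lam_coe μ hmemp q] with x h1 h2
    rw [h1, h2, RCLike.inner_apply, mul_comm]
  rw [hR]
  -- expand both into double sums
  have hL : (inner ℂ (phi ψ p) (phi ψ q) : ℂ)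
      = ∑ j ∈ Finset.range (p.natDegree + 1), ∑ k ∈ Finset.range (q.natDegree + 1),
          (starRingEnd ℂ) (p.coeff j) * q.coeff k * ∫ x : ℝ, (x:ℂ)^(j+k) ∂μ := by
    rw [phi_eq_sum_range ψ p (Nat.lt_succ_self _), phi_eq_sum_range ψ q (Nat.lt_succ_self _),
      sum_inner]
    refine Finset.sum_congr rfl fun j _ => ?_
    rw [inner_sum]
    refine Finset.sum_congr rfl fun k _ => ?_
    rw [inner_smul_left, inner_smul_right, hinner j k]
    ring
  rw [hL]
  -- expand the integral into a double sum
  have hint1 : ∀ j k : ℕ, Integrable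
      (fun x : ℝ => ((starRingEnd ℂ) (p.coeff j) * (x:ℂ)^j) * (q.coeff k * (x:ℂ)^k)) μ := by
    intro j k
    have : Integrable (fun x : ℝ => ((starRingEnd ℂ) (p.coeff j) * q.coeff k) * (x:ℂ)^(j+k)) μ :=
      (hintC (j+k)).const_mul _
    refine this.congr (Filter.Eventually.of_forall fun x => ?_)
    simp only [pow_add]; ring
  have hEval : ∀ x : ℝ, (starRingEnd ℂ) (p.eval (x:ℂ)) * q.eval (x:ℂ)
      = ∑ j ∈ Finset.range (p.natDegree + 1), ∑ k ∈ Finset.range (q.natDegree + 1),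
          ((starRingEnd ℂ) (p.coeff j) * (x:ℂ)^j) * (q.coeff k * (x:ℂ)^k) := by
    intro x
    rw [Polynomial.eval_eq_sum_range, Polynomial.eval_eq_sum_range, map_sum, Finset.sum_mul_sum]
    refine Finset.sum_congr rfl fun j _ => Finset.sum_congr rfl fun k _ => ?_
    rw [map_mul, map_pow, Complex.conj_ofReal]
  calc ∑ j ∈ Finset.range (p.natDegree + 1), ∑ k ∈ Finset.range (q.natDegree + 1),
        (starRingEnd ℂ) (p.coeff j) * q.coeff k * ∫ x : ℝ, (x:ℂ)^(j+k) ∂μ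
      = ∑ j ∈ Finset.range (p.natDegree + 1), ∑ k ∈ Finset.range (q.natDegree + 1),
        ∫ x : ℝ, ((starRingEnd ℂ) (p.coeff j) * (x:ℂ)^j) * (q.coeff k * (x:ℂ)^k) ∂μ := by
        refine Finset.sum_congr rfl fun j _ => Finset.sum_congr rfl fun k _ => ?_
        rw [key]
    _ = ∫ x : ℝ, ∑ j ∈ Finset.range (p.natDegree + 1), ∑ k ∈ Finset.range (q.natDegree + 1),
        ((starRingEnd ℂ) (p.coeff j) * (x:ℂ)^j) * (q.coeff k * (x:ℂ)^k) ∂μ := by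
        rw [integral_finset_sum _ (fun j _ => integrable_finset_sum _ (fun k _ => hint1 j k))]
        refine Finset.sum_congr rfl fun j _ => ?_
        rw [integral_finset_sum _ (fun k _ => hint1 j k)]
    _ = ∫ x : ℝ, (starRingEnd ℂ) (p.eval (x:ℂ)) * q.eval (x:ℂ) ∂μ := by
        refine integral_congr_ae (Filter.Eventually.of_forall fun x => ?_)
        simp only []
        rw [hEval]

theorem denseRange_lam (μ : Measure ℝ) [IsFiniteMeasure μ] (B : ℝ) (hB : 0 < B)
    (hae : ∀ᵐ x ∂μ, |x| ≤ B)
    (hmemp : ∀ p : Polynomial ℂ, MemLp (fun x : ℝ => p.eval (x : ℂ)) 2 μ) :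
    DenseRange (Lam μ hmemp) := by
  rw [Metric.denseRange_iff]
  intro v ε hε
  -- Step A : approximate by a bounded continuous function
  have hdense := Lp.boundedContinuousFunction_dense ℂ μ (p := 2) (by norm_num)
  obtain ⟨b, hbmem, hvb⟩ := Metric.mem_closure_iff.mp (hdense ((v : Lp ℂ 2 μ)))
    (ε / 2) (by positivity)
  obtain ⟨F, hF⟩ := Lp.mem_boundedContinuousFunction_iff.mp hbmem
  have hbF : ⇑b =ᵐ[μ] ⇑F := by
    have h1 : ⇑(ContinuousMap.toAEEqFun μ F.toContinuousMap) =ᵐ[μ] ⇑F :=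
      ContinuousMap.coeFn_toAEEqFun μ F.toContinuousMap
    rw [hF] at h1
    exact h1
  -- Step B : Stone-Weierstrass on Icc (-B) B
  set m₀ : ℝ := (measureUnivNNReal μ : ℝ) ^ (2 : ENNReal).toReal⁻¹ with hm₀
  have hm₀0 : 0 ≤ m₀ := Real.rpow_nonneg (NNReal.coe_nonneg _) _
  set δ : ℝ := (ε / 2) / (m₀ + 1) with hδ
  have hδ0 : 0 < δ := by positivity
  set Xs : Set ℝ := Set.Icc (-B) B with hXs
  set G₁ : C(Xs, ℝ) := ⟨fun x => (F x).re,
    Complex.continuous_re.comp (F.continuous.comp continuous_subtype_val)⟩ with hG₁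
  set G₂ : C(Xs, ℝ) := ⟨fun x => (F x).im,
    Complex.continuous_im.comp (F.continuous.comp continuous_subtype_val)⟩ with hG₂
  obtain ⟨g₁, hg₁⟩ := ContinuousMap.exists_mem_subalgebra_near_continuousMap_of_separatesPoints
    (polynomialFunctions Xs) (polynomialFunctions_separatesPoints Xs) G₁ (δ/2) (by positivity)
  obtain ⟨g₂, hg₂⟩ := ContinuousMap.exists_mem_subalgebra_near_continuousMap_of_separatesPoints
    (polynomialFunctions Xs) (polynomialFunctions_separatesPoints Xs) G₂ (δ/2) (by positivity)
  obtain ⟨p₁, -, hp₁⟩ := Subalgebra.mem_map.mp g₁.2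
  obtain ⟨p₂, -, hp₂⟩ := Subalgebra.mem_map.mp g₂.2
  set P : Polynomial ℂ := p₁.map Complex.ofRealHom + C Complex.I * p₂.map Complex.ofRealHom
    with hP
  have hPeval : ∀ x : ℝ, P.eval (x : ℂ)
      = ((p₁.eval x : ℝ) : ℂ) + Complex.I * ((p₂.eval x : ℝ) : ℂ) := by
    intro x
    have h1 : (p₁.map Complex.ofRealHom).eval (x : ℂ) = ((p₁.eval x : ℝ) : ℂ) := by
      rw [Polynomial.eval_map]
      exact Polynomial.eval₂_at_apply Complex.ofRealHom x
    have h2 : (p₂.map Complex.ofRealHom).eval (x : ℂ) = ((p₂.eval x : ℝ) : ℂ) := by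
      rw [Polynomial.eval_map]
      exact Polynomial.eval₂_at_apply Complex.ofRealHom x
    rw [hP, Polynomial.eval_add, Polynomial.eval_mul, Polynomial.eval_C, h1, h2]
  have hclose : ∀ x : ℝ, |x| ≤ B → ‖F x - P.eval (x : ℂ)‖ ≤ δ := by
    intro x hx
    have hxX : x ∈ Xs := by
      rw [hXs, Set.mem_Icc]
      constructor <;> [linarith [neg_abs_le x]; linarith [le_abs_self x]]
    set x' : Xs := ⟨x, hxX⟩
    have e₁ : |p₁.eval x - G₁ x'| < δ/2 := by
      have := ContinuousMap.norm_coe_le_norm ((g₁ : C(Xs, ℝ)) - G₁) x'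
      have hg₁x : (g₁ : C(Xs, ℝ)) x' = p₁.eval x := by
        rw [← hp₁, Polynomial.toContinuousMapOnAlgHom_apply, Polynomial.toContinuousMapOn_apply,
          Polynomial.toContinuousMap_apply]
      rw [ContinuousMap.sub_apply, hg₁x, Real.norm_eq_abs] at this
      exact lt_of_le_of_lt this hg₁
    have e₂ : |p₂.eval x - G₂ x'| < δ/2 := by
      have := ContinuousMap.norm_coe_le_norm ((g₂ : C(Xs, ℝ)) - G₂) x'
      have hg₂x : (g₂ : C(Xs, ℝ)) x' = p₂.eval x := by
        rw [← hp₂, Polynomial.toContinuousMapOnAlgHom_apply, Polynomial.toContinuousMapOn_apply,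
          Polynomial.toContinuousMap_apply]
      rw [ContinuousMap.sub_apply, hg₂x, Real.norm_eq_abs] at this
      exact lt_of_le_of_lt this hg₂
    have hF' : F x = ((G₁ x' : ℝ) : ℂ) + Complex.I * ((G₂ x' : ℝ) : ℂ) := by
      rw [hG₁, hG₂]
      simp only [ContinuousMap.coe_mk]
      rw [mul_comm]
      exact (Complex.re_add_im (F x')).symm
    rw [hF', hPeval]
    have : ((G₁ x' : ℝ) : ℂ) + Complex.I * ((G₂ x' : ℝ) : ℂ)
        - (((p₁.eval x : ℝ) : ℂ) + Complex.I * ((p₂.eval x : ℝ) : ℂ))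
        = ((G₁ x' - p₁.eval x : ℝ) : ℂ) + Complex.I * ((G₂ x' - p₂.eval x : ℝ) : ℂ) := by
      push_cast; ring
    rw [this]
    calc ‖((G₁ x' - p₁.eval x : ℝ) : ℂ) + Complex.I * ((G₂ x' - p₂.eval x : ℝ) : ℂ)‖
        ≤ ‖((G₁ x' - p₁.eval x : ℝ) : ℂ)‖ + ‖Complex.I * ((G₂ x' - p₂.eval x : ℝ) : ℂ)‖ :=
          norm_add_le _ _
      _ = |G₁ x' - p₁.eval x| + |G₂ x' - p₂.eval x| := by
          rw [norm_mul, Complex.norm_I, one_mul, Complex.norm_real, Complex.norm_real,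
            Real.norm_eq_abs, Real.norm_eq_abs]
      _ ≤ δ := by
          rw [abs_sub_comm (G₁ x') _, abs_sub_comm (G₂ x') _]
          linarith
  -- Step C : combine
  have hbP : ‖b - Lam μ hmemp P‖ ≤ m₀ * δ := by
    have hbound : ∀ᵐ x ∂μ, ‖(⇑(b - Lam μ hmemp P)) x‖ ≤ δ := by
      filter_upwards [hae, hbF, Lam_coe μ hmemp P, Lp.coeFn_sub b (Lam μ hmemp P)]
        with x h1 h2 h3 h4
      rw [h4, Pi.sub_apply, h2, h3]
      exact hclose x h1
    exact Lp.norm_le_of_ae_bound hδ0.le hbound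
  refine ⟨P, ?_⟩
  have : dist v (Lam μ hmemp P) ≤ dist v b + ‖b - Lam μ hmemp P‖ := by
    rw [← dist_eq_norm]
    exact dist_triangle _ _ _
  have hmδ : m₀ * δ ≤ ε / 2 := by
    have heq : m₀ * δ = (ε/2) * (m₀ / (m₀ + 1)) := by
      rw [hδ]; field_simp
    have hle : m₀ / (m₀ + 1) ≤ 1 := by
      rw [div_le_one (by positivity)]; linarith
    rw [heq]
    calc (ε/2) * (m₀ / (m₀ + 1)) ≤ (ε/2) * 1 :=
          mul_le_mul_of_nonneg_left hle (by positivity)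
      _ = ε / 2 := mul_one _
  calc dist v (Lam μ hmemp P) ≤ dist v b + ‖b - Lam μ hmemp P‖ := this
    _ < ε/2 + ε/2 := by
        refine add_lt_add_of_lt_of_le hvb (hbP.trans hmδ)
    _ = ε := by ring


end Stmt19Aux

open Stmt19Aux in
set_option maxHeartbeats 1000000 in
theorem stmt19 {H : Type*} [NormedAddCommGroup H] [InnerProductSpace ℂ H] [CompleteSpace H]
    (A : H →ₗ.[ℂ] H) (hdense : Dense (A.domain : Set H))
    (hsa : A.adjoint = A)
    (g : H) (ψ : ℕ → H) (hψ0 : ψ 0 = g)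
    (hmem : ∀ k, ψ k ∈ A.domain)
    (hstep : ∀ k, A ⟨ψ k, hmem k⟩ = ψ (k + 1))
    (B : ℝ) (hB : 0 < B) (hbdd : ∀ n : ℕ, ‖ψ n‖ ≤ B ^ n)
    (μ : Measure ℝ) [IsFiniteMeasure μ]
    (hμ : ∀ n : ℕ, ∫ x : ℝ, (x : ℂ) ^ n ∂μ = (inner ℂ g (ψ n) : ℂ))
    (hinj : ∀ (x : H) (hx : x ∈ A.domain), A ⟨x, hx⟩ = 0 → x = 0)
    (f : H) (hf : f ∈ A.domain) (hAf : A ⟨f, hf⟩ = g) :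
    ∃ U : Lp ℂ 2 μ ≃ₗᵢ[ℂ] (Submodule.span ℂ (Set.range ψ)).topologicalClosure,
      (∀ (p : Polynomial ℂ) (u : Lp ℂ 2 μ),
          (⇑u =ᵐ[μ] fun x : ℝ => p.eval (x : ℂ)) →
          ((U u : H) = ∑ k ∈ Finset.range (p.natDegree + 1), p.coeff k • ψ k))
      ∧ (∃ u : Lp ℂ 2 μ, (⇑u =ᵐ[μ] fun x : ℝ => ((x : ℂ))⁻¹) ∧ (U u : H) = f)
      ∧ f ∈ closure ((Submodule.span ℂ (Set.range ψ)) : Set H) := by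
  classical
  set K : Submodule ℂ H := Submodule.span ℂ (Set.range ψ) with hK
  -- symmetry of A
  have hdomeq : A.adjoint.domain = A.domain := congrArg LinearPMap.domain hsa
  have hle : A.adjoint ≤ A := le_of_eq hsa
  have hsym : ∀ x y : A.domain, (inner ℂ (A x) (y : H) : ℂ) = inner ℂ (x : H) (A y) := by
    intro x y
    have hx' : (x : H) ∈ A.adjoint.domain := by rw [hdomeq]; exact x.2
    have h := LinearPMap.adjoint_isFormalAdjoint hdense ⟨(x : H), hx'⟩ y
    rwa [hle.2 rfl] at h
  -- inner ℂ products of the orbit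
  have hinner0 : ∀ j k : ℕ, (inner ℂ (ψ j) (ψ k) : ℂ) = inner ℂ g (ψ (j + k)) := by
    intro j
    induction j with
    | zero => intro k; rw [hψ0, Nat.zero_add]
    | succ j ih =>
        intro k
        have h1 : (inner ℂ (ψ (j+1)) (ψ k) : ℂ) = inner ℂ (ψ j) (ψ (k+1)) := by
          rw [← hstep j, ← hstep k]
          exact hsym ⟨ψ j, hmem j⟩ ⟨ψ k, hmem k⟩
        have e : j + (k + 1) = j + 1 + k := by omega
        rw [h1, ih (k+1), e]
  have hinner : ∀ j k : ℕ, (inner ℂ (ψ j) (ψ k) : ℂ) = ∫ x : ℝ, (x : ℂ) ^ (j + k) ∂μ :=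
    fun j k => (hinner0 j k).trans (hμ (j + k)).symm
  -- integrability of moments
  have h2aux : ∀ n : ℕ, ψ n = 0 → g = 0 := by
    intro n
    induction n with
    | zero => intro h; rw [← hψ0]; exact h
    | succ n ih =>
        intro h
        refine ih (hinj (ψ n) (hmem n) ?_)
        rw [hstep n, h]
  have h1aux : ∀ n : ℕ, (inner ℂ g (ψ (2 * n)) : ℂ) = (‖ψ n‖ : ℂ) ^ 2 := by
    intro n
    have e : n + n = 2 * n := by omega
    have h := hinner0 n n
    rw [e] at h
    rw [← h, inner_self_eq_norm_sq_to_K]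
    norm_cast
  have hInt : ∀ n : ℕ, Integrable (fun x : ℝ => x ^ n) μ :=
    integrable_pow_of_moments g ψ hψ0 hμ h1aux h2aux
  have hIntC : ∀ n : ℕ, Integrable (fun x : ℝ => (x : ℂ) ^ n) μ :=
    integrable_cpow_of_moments hInt
  -- moments bounds and a.e. bound
  have hmomR : ∀ n : ℕ, ((∫ x : ℝ, x ^ n ∂μ : ℝ) : ℂ) = inner ℂ g (ψ n) := by
    intro n
    have heq : ∫ x : ℝ, (x:ℂ)^n ∂μ = ∫ x : ℝ, ((x ^ n : ℝ) : ℂ) ∂μ :=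
      integral_congr_ae (Filter.Eventually.of_forall fun x => by push_cast; ring)
    rw [← hμ n, heq]
    exact (integral_ofReal (𝕜 := ℂ) (f := fun x => x ^ n)).symm
  have hmom : ∀ n : ℕ, ∫ x : ℝ, x ^ (2 * n) ∂μ ≤ ‖g‖ * B ^ (2 * n) := by
    intro n
    have h0 := congrArg Complex.re (hmomR (2*n))
    rw [Complex.ofReal_re] at h0
    have h1 : (∫ x : ℝ, x ^ (2*n) ∂μ) ≤ ‖(inner ℂ g (ψ (2*n)) : ℂ)‖ := by
      rw [h0]
      exact Complex.re_le_norm _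
    refine h1.trans ((norm_inner_le_norm g (ψ (2*n))).trans ?_)
    exact mul_le_mul_of_nonneg_left (hbdd (2*n)) (norm_nonneg g)
  have hae : ∀ᵐ x ∂μ, |x| ≤ B :=
    ae_abs_le_of_moments B ‖g‖ hB (norm_nonneg g) (fun n => hInt (2*n)) hmom
  -- MemLp of polynomials
  have hmemp : ∀ p : Polynomial ℂ, MemLp (fun x : ℝ => p.eval (x : ℂ)) 2 μ := by
    intro p
    refine MemLp.of_bound ((p.continuous_aeval.comp Complex.continuous_ofReal).aestronglyMeasurable)
      (∑ k ∈ Finset.range (p.natDegree + 1), ‖p.coeff k‖ * B ^ k) ?_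
    filter_upwards [hae] with x hx
    rw [Polynomial.eval_eq_sum_range]
    refine (norm_sum_le _ _).trans (Finset.sum_le_sum fun k _ => ?_)
    rw [norm_mul, norm_pow, Complex.norm_real, Real.norm_eq_abs]
    refine mul_le_mul_of_nonneg_left (pow_le_pow_left₀ (abs_nonneg x) hx k) (norm_nonneg _)
  set Λ : Polynomial ℂ →ₗ[ℂ] Lp ℂ 2 μ := Lam μ hmemp with hΛ
  set φ : Polynomial ℂ →ₗ[ℂ] H := phi ψ with hφ
  have hiso : ∀ p q : Polynomial ℂ, (inner ℂ (φ p) (φ q) : ℂ) = inner ℂ (Λ p) (Λ q) :=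
    inner_phi_lam ψ μ hmemp hIntC hinner
  have hnorm : ∀ p : Polynomial ℂ, ‖φ p‖ = ‖Λ p‖ := by
    intro p
    have h1 := hiso p p
    rw [inner_self_eq_norm_sq_to_K, inner_self_eq_norm_sq_to_K] at h1
    have h2 : ‖φ p‖ ^ 2 = ‖Λ p‖ ^ 2 := by exact_mod_cast h1
    have := congrArg Real.sqrt h2
    rwa [Real.sqrt_sq (norm_nonneg _), Real.sqrt_sq (norm_nonneg _)] at this
  -- domain facts
  have hKdom : ∀ p : Polynomial ℂ, φ p ∈ A.domain := by
    intro p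
    rw [hφ, phi_eq_sum_range ψ p (Nat.lt_succ_self _)]
    exact Submodule.sum_mem _ fun k _ => Submodule.smul_mem _ _ (hmem k)
  have hstepφ : ∀ p : Polynomial ℂ, A ⟨φ p, hKdom p⟩ = φ (X * p) := by
    have key : ∀ (p : Polynomial ℂ) (hp : φ p ∈ A.domain), A ⟨φ p, hp⟩ = φ (X * p) := by
      intro p
      induction p using Polynomial.induction_on' with
      | add p q hp hq =>
          intro hpq
          have hmp : φ p ∈ A.domain := hKdom p
          have hmq : φ q ∈ A.domain := hKdom q
          have : (⟨φ (p + q), hpq⟩ : A.domain) = ⟨φ p, hmp⟩ + ⟨φ q, hmq⟩ := by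
            apply Subtype.ext
            simp [map_add]
          rw [this, LinearPMap.map_add, hp hmp, hq hmq, mul_add, map_add]
      | monomial k c =>
          intro hp
          have h1 : φ (monomial k c) = c • ψ k := phi_monomial ψ k c
          have : (⟨φ (monomial k c), hp⟩ : A.domain) = c • ⟨ψ k, hmem k⟩ := by
            apply Subtype.ext
            simp [h1]
          rw [this, LinearPMap.map_smul, hstep k, Polynomial.X_mul_monomial]
          rw [hφ, phi_monomial ψ (k+1) c]
    exact fun p => key p (hKdom p)
  have hφ1 : φ (1 : Polynomial ℂ) = g := by
    have : (1 : Polynomial ℂ) = X ^ 0 := by simp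
    rw [hφ, this, phi_X_pow, hψ0]
  have hφX : ∀ k : ℕ, φ (X ^ k : Polynomial ℂ) = ψ k := fun k => phi_X_pow ψ k
  have hrange : LinearMap.range φ = K := by
    apply le_antisymm
    · rintro - ⟨p, rfl⟩
      rw [hφ, phi_eq_sum_range ψ p (Nat.lt_succ_self _)]
      exact Submodule.sum_mem _ fun k _ =>
        Submodule.smul_mem _ _ (Submodule.subset_span (Set.mem_range_self k))
    · rw [hK, Submodule.span_le]
      rintro - ⟨k, rfl⟩
      exact ⟨X ^ k, hφX k⟩
  -- density of the range of Λ
  have hΛdr : DenseRange Λ := denseRange_lam μ B hB hae hmemp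
  set P : Submodule ℂ (Lp ℂ 2 μ) := LinearMap.range Λ with hP
  have hPdense : Dense (P : Set (Lp ℂ 2 μ)) := by
    have : (P : Set (Lp ℂ 2 μ)) = Set.range Λ := by
      rw [hP]; rfl
    rw [this]
    exact hΛdr
  -- the isometry on the range of Λ
  have hker : LinearMap.ker Λ ≤ LinearMap.ker φ := by
    intro p hp
    rw [LinearMap.mem_ker] at hp ⊢
    rw [← norm_eq_zero, hnorm p, hp, norm_zero]
  set ℓ : P →ₗ[ℂ] H :=
    (((LinearMap.ker Λ).liftQ φ hker).comp Λ.quotKerEquivRange.symm.toLinearMap) with hℓdef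
  have hℓ : ∀ p : Polynomial ℂ, ℓ ⟨Λ p, LinearMap.mem_range_self Λ p⟩ = φ p := by
    intro p
    have h1 : Λ.quotKerEquivRange (Submodule.Quotient.mk p)
        = ⟨Λ p, LinearMap.mem_range_self Λ p⟩ := by
      apply Subtype.ext
      exact LinearMap.quotKerEquivRange_apply_mk Λ p
    have h2 : Λ.quotKerEquivRange.symm ⟨Λ p, LinearMap.mem_range_self Λ p⟩
        = Submodule.Quotient.mk p := by
      rw [← h1, LinearEquiv.symm_apply_apply]
    rw [hℓdef, LinearMap.comp_apply, LinearEquiv.coe_toLinearMap, h2, Submodule.liftQ_apply]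
  have hℓnorm : ∀ v : P, ‖ℓ v‖ = ‖v‖ := by
    rintro ⟨v, hv⟩
    obtain ⟨p, rfl⟩ := hv
    rw [hℓ p]
    exact hnorm p
  set ℓc : P →L[ℂ] H := ℓ.mkContinuous 1 (fun v => by rw [hℓnorm v, one_mul]) with hℓc
  set U₀ : Lp ℂ 2 μ →L[ℂ] H :=
    ℓc.extend P.subtypeL with hU₀def
  have hU₀P : ∀ v : P, U₀ v = ℓ v := by
    intro v
    have := ContinuousLinearMap.extend_eq (f := ℓc) (e := P.subtypeL) hPdense.denseRange_val
      isUniformEmbedding_subtype_val.isUniformInducing v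
    rw [hU₀def]
    exact this
  have hU₀Λ : ∀ p : Polynomial ℂ, U₀ (Λ p) = φ p := by
    intro p
    have := hU₀P ⟨Λ p, LinearMap.mem_range_self Λ p⟩
    rw [hℓ p] at this
    exact this
  have hU₀norm : ∀ u : Lp ℂ 2 μ, ‖U₀ u‖ = ‖u‖ := by
    have heq : (fun u : Lp ℂ 2 μ => ‖U₀ u‖) = fun u => ‖u‖ := by
      refine Continuous.ext_on hPdense (U₀.continuous.norm) continuous_norm ?_
      rintro v hv
      have h1 := hU₀P ⟨v, hv⟩
      have h2 := hℓnorm ⟨v, hv⟩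
      simp only at h1 h2 ⊢
      rw [h1, h2]
      rfl
    exact fun u => congrFun heq u
  have hU₀M : ∀ u : Lp ℂ 2 μ, U₀ u ∈ K.topologicalClosure := by
    have hclosed : IsClosed {u : Lp ℂ 2 μ | U₀ u ∈ K.topologicalClosure} :=
      (K.isClosed_topologicalClosure).preimage U₀.continuous
    have hsub : (P : Set (Lp ℂ 2 μ)) ⊆ {u : Lp ℂ 2 μ | U₀ u ∈ K.topologicalClosure} := by
      rintro - ⟨p, rfl⟩
      rw [Set.mem_setOf_eq, hU₀Λ p]
      exact K.le_topologicalClosure (hrange ▸ LinearMap.mem_range_self φ p)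
    intro u
    have : closure (P : Set (Lp ℂ 2 μ)) ⊆ {u : Lp ℂ 2 μ | U₀ u ∈ K.topologicalClosure} :=
      closure_minimal hsub hclosed
    exact this (hPdense.closure_eq ▸ Set.mem_univ u)
  haveI hMcomplete : CompleteSpace (K.topologicalClosure) :=
    (K.isClosed_topologicalClosure).completeSpace_coe
  set Uiso : Lp ℂ 2 μ →ₗᵢ[ℂ] K.topologicalClosure :=
    { toLinearMap := LinearMap.codRestrict K.topologicalClosure (U₀ : Lp ℂ 2 μ →ₗ[ℂ] H) hU₀M
      norm_map' := fun u => by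
        have : ‖(LinearMap.codRestrict K.topologicalClosure (U₀ : Lp ℂ 2 μ →ₗ[ℂ] H) hU₀M) u‖
            = ‖U₀ u‖ := rfl
        rw [this, hU₀norm u] } with hUiso
  have hUisoCoe : ∀ u : Lp ℂ 2 μ, (Uiso u : H) = U₀ u := fun u => rfl
  have hsurj : Function.Surjective Uiso := by
    have hclosedRange : IsClosed (Set.range Uiso : Set K.topologicalClosure) :=
      (Uiso.isometry.isClosedEmbedding).isClosed_range
    have hDsub : {m : K.topologicalClosure | (m : H) ∈ K} ⊆ Set.range Uiso := by
      rintro m hm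
      have hm' : (m : H) ∈ LinearMap.range φ := by rw [hrange]; exact hm
      obtain ⟨p, hp⟩ := hm'
      refine ⟨Λ p, ?_⟩
      apply Subtype.ext
      rw [hUisoCoe, hU₀Λ p, hp]
    have hDdense : ∀ m : K.topologicalClosure, m ∈ closure {m : K.topologicalClosure | (m : H) ∈ K} := by
      intro m
      rw [closure_subtype]
      have himg : Subtype.val '' {m : K.topologicalClosure | (m : H) ∈ K} = (K : Set H) := by
        ext x
        constructor
        · rintro ⟨⟨y, hy⟩, hyK, rfl⟩
          exact hyK
        · intro hx
          exact ⟨⟨x, K.le_topologicalClosure hx⟩, hx, rfl⟩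
      rw [himg]
      have := m.2
      rwa [← Submodule.topologicalClosure_coe]
    intro m
    have h1 : m ∈ closure (Set.range Uiso : Set K.topologicalClosure) :=
      closure_mono hDsub (hDdense m)
    rwa [hclosedRange.closure_eq] at h1
  set U : Lp ℂ 2 μ ≃ₗᵢ[ℂ] K.topologicalClosure :=
    LinearIsometryEquiv.ofSurjective Uiso hsurj with hU
  have hUcoe : ∀ u : Lp ℂ 2 μ, (U u : H) = U₀ u := by
    intro u
    rw [hU]
    have : (LinearIsometryEquiv.ofSurjective Uiso hsurj) u = Uiso u := by
      rw [LinearIsometryEquiv.coe_ofSurjective]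
    rw [this, hUisoCoe]
  -- multiplication by x on L²
  have hmulmem : ∀ v : Lp ℂ 2 μ, MemLp (fun x : ℝ => (x:ℂ) * v x) 2 μ := by
    intro v
    refine MemLp.of_le_mul (c := B) (Lp.memLp v)
      ((Complex.continuous_ofReal.aestronglyMeasurable).mul (Lp.aestronglyMeasurable v)) ?_
    filter_upwards [hae] with x hx
    rw [norm_mul, Complex.norm_real, Real.norm_eq_abs]
    exact mul_le_mul_of_nonneg_right hx (norm_nonneg _)
  set Tm : Lp ℂ 2 μ → Lp ℂ 2 μ := fun v => (hmulmem v).toLp _ with hTmdef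
  have hTmcoe : ∀ v : Lp ℂ 2 μ, ⇑(Tm v) =ᵐ[μ] fun x : ℝ => (x:ℂ) * v x :=
    fun v => MemLp.coeFn_toLp (hmulmem v)
  have hTmlip : ∀ v w : Lp ℂ 2 μ, ‖Tm v - Tm w‖ ≤ B * ‖v - w‖ := by
    intro v w
    have h1 : ‖Tm v - Tm w‖ ≤ ‖(B:ℂ) • (v - w)‖ := by
      rw [Lp.norm_def, Lp.norm_def]
      refine ENNReal.toReal_mono (Lp.eLpNorm_ne_top _) (eLpNorm_mono_ae ?_)
      filter_upwards [hae, hTmcoe v, hTmcoe w, Lp.coeFn_sub (Tm v) (Tm w),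
        Lp.coeFn_sub v w, Lp.coeFn_smul (B:ℂ) (v - w)] with x hx h2 h3 h4 h5 h6
      rw [h4, Pi.sub_apply, h2, h3, h6, Pi.smul_apply, h5, Pi.sub_apply]
      rw [smul_eq_mul, ← mul_sub, norm_mul, norm_mul, Complex.norm_real,
        Complex.norm_real, Real.norm_eq_abs, Real.norm_eq_abs, abs_of_pos hB]
      exact mul_le_mul_of_nonneg_right hx (norm_nonneg _)
    rw [norm_smul, Complex.norm_real, Real.norm_eq_abs, abs_of_pos hB] at h1
    exact h1
  have hTmΛ : ∀ p : Polynomial ℂ, Tm (Λ p) = Λ (X * p) := by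
    intro p
    apply Lp.ext
    filter_upwards [hTmcoe (Λ p), Lam_coe μ hmemp p, Lam_coe μ hmemp (X * p)] with x h1 h2 h3
    rw [h1, h2, h3, Polynomial.eval_mul, Polynomial.eval_X]
  -- the candidate solution in L²
  set w : Lp ℂ 2 μ := (ContinuousLinearMap.adjoint U₀) f with hwdef
  have hwinner : ∀ u : Lp ℂ 2 μ, (inner ℂ w u : ℂ) = inner ℂ f (U₀ u) :=
    fun u => ContinuousLinearMap.adjoint_inner_left U₀ u f
  have hfA : ∀ p : Polynomial ℂ, (inner ℂ f (φ (X * p)) : ℂ) = inner ℂ g (φ p) := by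
    intro p
    rw [← hstepφ p, ← hsym ⟨f, hf⟩ ⟨φ p, hKdom p⟩, hAf]
  have hTw : Tm w = Λ 1 := by
    have horth : ∀ v : P, (inner ℂ (Tm w - Λ 1) (v : Lp ℂ 2 μ) : ℂ) = 0 := by
      rintro ⟨v, hv⟩
      obtain ⟨p, rfl⟩ := hv
      have e1 : (inner ℂ (Tm w) (Λ p) : ℂ) = inner ℂ w (Λ (X * p)) := by
        rw [L2.inner_def, L2.inner_def]
        refine integral_congr_ae ?_
        filter_upwards [hTmcoe w, Lam_coe μ hmemp p, Lam_coe μ hmemp (X * p)] with x h1 h2 h3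
        rw [h1, h2, h3, RCLike.inner_apply, RCLike.inner_apply, Polynomial.eval_mul,
          Polynomial.eval_X, map_mul, Complex.conj_ofReal]
        ring
      have e2 : (inner ℂ (Λ (1:Polynomial ℂ)) (Λ p) : ℂ) = inner ℂ g (φ p) := by
        rw [← hiso 1 p, hφ1]
      show (inner ℂ (Tm w - Λ 1) (Λ p) : ℂ) = 0
      rw [inner_sub_left, e1, e2, hwinner (Λ (X * p)), hU₀Λ (X * p), hfA p, sub_self]
    have h0 : Tm w - Λ 1 = 0 := hPdense.eq_zero_of_inner_left ℂ (fun v hv => horth ⟨v, hv⟩)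
    have := sub_eq_zero.mp h0
    exact this
  have hwcoe : ⇑w =ᵐ[μ] fun x : ℝ => ((x:ℂ))⁻¹ := by
    have h1 : ⇑(Tm w) =ᵐ[μ] ⇑(Λ (1:Polynomial ℂ)) := by rw [hTw]
    filter_upwards [hTmcoe w, Lam_coe μ hmemp 1, h1] with x h2 h3 h4
    have h5 : (x:ℂ) * w x = 1 := by
      rw [← h2, h4, h3, Polynomial.eval_one]
    exact eq_inv_of_mul_eq_one_left (by rw [mul_comm]; exact h5)
  -- approximation sequence and closedness of A
  have hseq : ∀ n : ℕ, ∃ p : Polynomial ℂ, dist w (Λ p) < 1 / (n + 1) :=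
    fun n => Metric.denseRange_iff.mp hΛdr w (1/(n+1)) (by positivity)
  choose ps hps using hseq
  have htend1 : Filter.Tendsto (fun n => Λ (ps n)) Filter.atTop (nhds w) := by
    rw [tendsto_iff_dist_tendsto_zero]
    refine squeeze_zero (fun n => dist_nonneg) (fun n => ?_) tendsto_one_div_add_atTop_nhds_zero_nat
    rw [dist_comm]
    exact (hps n).le
  have htend2 : Filter.Tendsto (fun n => U₀ (Λ (ps n))) Filter.atTop (nhds (U₀ w)) :=
    (U₀.continuous.tendsto w).comp htend1
  have htend3 : Filter.Tendsto (fun n => Λ (X * ps n)) Filter.atTop (nhds (Λ 1)) := by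
    rw [← hTw]
    rw [tendsto_iff_norm_sub_tendsto_zero]
    have htendb : Filter.Tendsto (fun n : ℕ => B * (1/(n+1))) Filter.atTop (nhds 0) := by
      have hb := tendsto_one_div_add_atTop_nhds_zero_nat.const_mul B
      rwa [mul_zero] at hb
    refine squeeze_zero (fun n => norm_nonneg _) (fun n => ?_) htendb
    rw [← hTmΛ (ps n)]
    calc ‖Tm (Λ (ps n)) - Tm w‖ ≤ B * ‖Λ (ps n) - w‖ := hTmlip _ _
      _ = B * dist (Λ (ps n)) w := by rw [dist_eq_norm]
      _ ≤ B * (1 / (n+1)) := by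
          refine mul_le_mul_of_nonneg_left ?_ hB.le
          rw [dist_comm]
          exact (hps n).le
  have htend4 : Filter.Tendsto (fun n => U₀ (Λ (X * ps n))) Filter.atTop (nhds (U₀ (Λ 1))) :=
    (U₀.continuous.tendsto _).comp htend3
  set z : H := U₀ w with hzdef
  have hclaim : ∀ x : A.domain, (inner ℂ g (x : H) : ℂ) = inner ℂ z (A x) := by
    intro x
    have heq4 : (fun n => U₀ (Λ (X * ps n))) = fun n => φ (X * ps n) := funext fun n => hU₀Λ _
    have l0 : Filter.Tendsto (fun n => φ (X * ps n)) Filter.atTop (nhds g) := by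
      rw [← heq4, ← hφ1, ← hU₀Λ 1]
      exact htend4
    have l1 : Filter.Tendsto (fun n => (inner ℂ (φ (X * ps n)) (x:H) : ℂ)) Filter.atTop
        (nhds (inner ℂ g (x:H))) := l0.inner tendsto_const_nhds
    have heq2 : (fun n => U₀ (Λ (ps n))) = fun n => φ (ps n) := funext fun n => hU₀Λ _
    have l2' : Filter.Tendsto (fun n => φ (ps n)) Filter.atTop (nhds z) := by
      rw [← heq2]
      exact htend2
    have l2 : Filter.Tendsto (fun n => (inner ℂ (φ (X * ps n)) (x:H) : ℂ)) Filter.atTop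
        (nhds (inner ℂ z (A x))) := by
      have heq3 : (fun n => (inner ℂ (φ (X * ps n)) (x:H) : ℂ))
          = fun n => (inner ℂ (φ (ps n)) ((A x : H)) : ℂ) := by
        funext n
        rw [← hstepφ (ps n)]
        exact hsym ⟨φ (ps n), hKdom (ps n)⟩ x
      rw [heq3]
      exact l2'.inner tendsto_const_nhds
    exact tendsto_nhds_unique l1 l2
  have hzdom' : z ∈ A.adjoint.domain :=
    LinearPMap.mem_adjoint_domain_of_exists z ⟨g, fun x => hclaim x⟩
  have hzdom : z ∈ A.domain := by rw [← hdomeq]; exact hzdom'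
  have hAz : A ⟨z, hzdom⟩ = g := by
    have h1 : A.adjoint ⟨z, hzdom'⟩ = g :=
      LinearPMap.adjoint_apply_eq hdense ⟨z, hzdom'⟩ (fun x => hclaim x)
    rw [← h1]
    exact (hle.2 rfl).symm
  have hzf : z = f := by
    have hsubmem : z - f ∈ A.domain := sub_mem hzdom hf
    have h0 : A ⟨z - f, hsubmem⟩ = 0 := by
      have he : (⟨z - f, hsubmem⟩ : A.domain) = ⟨z, hzdom⟩ - ⟨f, hf⟩ := by
        apply Subtype.ext
        rfl
      rw [he, LinearPMap.map_sub, hAz, hAf, sub_self]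
    exact sub_eq_zero.mp (hinj (z - f) hsubmem h0)
  refine ⟨U, ?_, ?_, ?_⟩
  · -- polynomials go to orbit sums
    intro p u hu
    have hu' : u = Λ p := Lp.ext (hu.trans (Lam_coe μ hmemp p).symm)
    rw [hu', hUcoe, hU₀Λ p, hφ, phi_eq_sum_range ψ p (Nat.lt_succ_self _)]
  · -- the solution of A f = g
    refine ⟨w, hwcoe, ?_⟩
    rw [hUcoe w, ← hzdef, hzf]
  · -- f is in the closure of the Krylov space
    have h1 : f ∈ K.topologicalClosure := by
      rw [← hzf, hzdef]
      exact hU₀M w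
    have h2 : f ∈ (K.topologicalClosure : Set H) := h1
    rwa [Submodule.topologicalClosure_coe] at h2
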